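/- Let V' be a valuation ring extending a valuation ring V, with maximal ideal m', and let (v_i)_{i<λ} be a pseudo convergent sequence in V with pseudo limit x ∈ V' but no pseudo limit in the fraction field K of V. For i < λ set x_i = (x − v_i)/(v_{i+1} − v_i) ∈ V'. Then for any indices i < i' < λ there exist a unit α ∈ V and a non-unit β ∈ V such that x_i = α + β·x_{i'}. Consequently the localizations V[x_i]_{m' ∩ V[x_i]} form a filtered increasing family of subrings of V' with respect to i. -/

import Mathlib

open Polynomial

section ValuationDefs

variable {Γ : Type*} [AddCommGroup Γ] [LinearOrder Γ] [IsOrderedAddMonoid Γ] {K : Type*} [Field K]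

/-- `val` is an (additive, Krull) valuation on the field `K` with values in
`WithTop Γ`: `val 0 = ⊤`, nonzero elements have values in `Γ`, `val` is
multiplicative-to-additive and satisfies the ultrametric inequality.
The valuation ring is `{x | 0 ≤ val x}`. -/
def IsAddValuation (val : K → WithTop Γ) : Prop :=
  val 0 = ⊤ ∧ (∀ x : K, x ≠ 0 → val x ≠ ⊤) ∧
    (∀ x y : K, val (x * y) = val x + val y) ∧
    ∀ x y : K, min (val x) (val y) ≤ val (x + y)

/-- The valuation ring of the subfield `K₀` gives an immediate extension inside
the valued field `K`: the inclusion induces isomorphisms on value groups and on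
residue fields. -/
def IsImmediate (val : K → WithTop Γ) (K₀ : Subfield K) : Prop :=
  (∀ x : K, x ≠ 0 → ∃ y ∈ K₀, val y = val x) ∧
    ∀ x : K, val x = 0 → ∃ y ∈ K₀, 0 < val (x - y)

/-- `(v i)_{i < lam}` is a pseudo convergent sequence:
`val (v i - v i'') < val (v i' - v i'')` for `i < i' < i'' < lam`. -/
def PseudoConvergent (val : K → WithTop Γ) (lam : Ordinal) (v : Ordinal → K) : Prop :=
  ∀ i i' i'' : Ordinal, i < i' → i' < i'' → i'' < lam →
    val (v i - v i'') < val (v i' - v i'')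

/-- `x` is a pseudo limit of `(v i)_{i < lam}`: `val (x - v i)` is strictly
increasing in `i`. -/
def IsPseudoLimit (val : K → WithTop Γ) (lam : Ordinal) (v : Ordinal → K) (x : K) : Prop :=
  ∀ i i' : Ordinal, i < i' → i' < lam → val (x - v i) < val (x - v i')

/-- the polynomial `f` has all its coefficients in the valuation ring of the
subfield `K₀`, i.e. `f ∈ V[X]` where `V = K₀ ∩ {0 ≤ val}`. -/
def CoeffsIn (val : K → WithTop Γ) (K₀ : Subfield K) (f : Polynomial K) : Prop :=
  ∀ n : ℕ, f.coeff n ∈ K₀ ∧ 0 ≤ val (f.coeff n)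

/-- the values of `f` along the sequence `v` are eventually strictly
increasing (witnessing that `v` is algebraic via `f`). -/
def EvIncreasing (val : K → WithTop Γ) (lam : Ordinal) (v : Ordinal → K)
    (f : Polynomial K) : Prop :=
  ∃ ν : Ordinal, ν < lam ∧ ∀ i i' : Ordinal, ν < i → i < i' → i' < lam →
    val (f.eval (v i)) < val (f.eval (v i'))

end ValuationDefs

section Helpers

variable {Γ : Type*} [AddCommGroup Γ] [LinearOrder Γ] [IsOrderedAddMonoid Γ] {K : Type*} [Field K]
variable {val : K → WithTop Γ}

lemma myCancel {a b : WithTop Γ} (hb : b ≠ ⊤) (h : a + b = b) : a = 0 := by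
  have : a + b = 0 + b := by rw [h, zero_add]
  exact WithTop.add_right_cancel hb this

lemma IsAddValuation.val_one (h : IsAddValuation val) : val 1 = 0 := by
  have h1 : val 1 ≠ ⊤ := h.2.1 1 one_ne_zero
  have : val 1 + val 1 = val 1 := by
    conv_rhs => rw [show (1 : K) = 1 * 1 by ring, h.2.2.1]
  exact myCancel h1 this

lemma IsAddValuation.val_neg (h : IsAddValuation val) (y : K) : val (-y) = val y := by
  have hm1 : val (-1 : K) ≠ ⊤ := h.2.1 _ (by norm_num)
  have hhalf : val (-1 : K) + val (-1 : K) = 0 := by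
    rw [← h.2.2.1, show ((-1 : K) * (-1)) = 1 by ring, h.val_one]
  have h0 : val (-1 : K) = 0 := by
    lift val (-1 : K) to Γ using hm1 with g hg
    have hg2 : g + g = 0 := by exact_mod_cast hhalf
    have hg0 : g = 0 := by
      rcases lt_trichotomy g 0 with hl | he | hl
      · exact absurd hg2 (by have := add_lt_add hl hl; simp only [add_zero] at this; exact ne_of_lt this)
      · exact he
      · exact absurd hg2 (by have := add_lt_add hl hl; simp only [add_zero] at this; exact ne_of_gt this)
    exact_mod_cast hg0
  rw [show -y = (-1 : K) * y by ring, h.2.2.1, h0, zero_add]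

lemma IsAddValuation.val_add_of_lt (h : IsAddValuation val) {x y : K}
    (hxy : val x < val y) : val (x + y) = val x := by
  refine le_antisymm ?_ ?_
  · by_contra hc
    push_neg at hc
    have h1 : val x < val (x + y) := hc
    have h2 : val x = val ((x + y) + (-y)) := by ring_nf
    have h3 : min (val (x + y)) (val (-y)) ≤ val x := h2 ▸ h.2.2.2 (x + y) (-y)
    rw [h.val_neg] at h3
    exact absurd h3 (not_le.mpr (lt_min h1 hxy))
  · have := h.2.2.2 x y
    rwa [min_eq_left hxy.le] at this

end Helpers


/-- **The rings `V[x_i]` localized at `m' ∩ V[x_i]` form a filtered increasing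
family.**  With `x_i = (x - v i)/(v (i+1) - v i)`, for `i < i' < λ` there are a
unit `α ∈ V` and a non-unit `β ∈ V` with `x_i = α + β * x_i'`; consequently the
localization of `V[x_i]` at `m' ∩ V[x_i]` (the set of fractions `p/q` with
`p, q ∈ V[x_i]`, `val q = 0`) is contained in that of `V[x_i']`. -/
theorem localizations_filtered {Γ : Type*} [AddCommGroup Γ] [LinearOrder Γ] [IsOrderedAddMonoid Γ]
    {K' : Type*} [Field K'] (val : K' → WithTop Γ) (hval : IsAddValuation val)
    (Ksub : Subfield K')
    (lam : Ordinal) (hlam : Order.IsSuccLimit lam)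
    (v : Ordinal → K') (hv : ∀ i : Ordinal, i < lam → v i ∈ Ksub ∧ 0 ≤ val (v i))
    (hpc : PseudoConvergent val lam v)
    (x : K') (hx : 0 ≤ val x) (hlim : IsPseudoLimit val lam v x)
    (hnolim : ¬ ∃ y : K', y ∈ Ksub ∧ IsPseudoLimit val lam v y) :
    ∀ i i' : Ordinal, i < i' → i' < lam →
      (∃ α β : K', α ∈ Ksub ∧ val α = 0 ∧ β ∈ Ksub ∧ 0 < val β ∧
        (x - v i) / (v (i + 1) - v i) = α + β * ((x - v i') / (v (i' + 1) - v i'))) ∧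
      ∀ z : K',
        (∃ p q : K',
          p ∈ Subring.closure
            ({w : K' | w ∈ Ksub ∧ 0 ≤ val w} ∪ {(x - v i) / (v (i + 1) - v i)}) ∧
          q ∈ Subring.closure
            ({w : K' | w ∈ Ksub ∧ 0 ≤ val w} ∪ {(x - v i) / (v (i + 1) - v i)}) ∧
          val q = 0 ∧ z = p / q) →
        ∃ p q : K',
          p ∈ Subring.closure
            ({w : K' | w ∈ Ksub ∧ 0 ≤ val w} ∪ {(x - v i') / (v (i' + 1) - v i')}) ∧
          q ∈ Subring.closure
            ({w : K' | w ∈ Ksub ∧ 0 ≤ val w} ∪ {(x - v i') / (v (i' + 1) - v i')}) ∧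
          val q = 0 ∧ z = p / q := by
  
  intro i i' hii' hi'lam
  have hilam : i < lam := hii'.trans hi'lam
  have hmul := hval.2.2.1
  have hlt_succ : ∀ j : Ordinal, j < j + 1 := by
    intro j; rw [Ordinal.add_one_eq_succ]; exact Order.lt_succ j
  have hsucc : ∀ j : Ordinal, j < lam → j + 1 < lam := by
    intro j hj; rw [Ordinal.add_one_eq_succ]; exact hlam.succ_lt hj
  -- differences are nonzero
  have hne : ∀ j : Ordinal, j < lam → v (j + 1) - v j ≠ 0 := by
    intro j hj h0
    have h1 : v (j + 1) = v j := by rwa [sub_eq_zero] at h0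
    have := hpc j (j + 1) (j + 1 + 1) (hlt_succ j) (hlt_succ (j + 1))
      (hsucc _ (hsucc _ hj))
    rw [h1] at this
    exact lt_irrefl _ this
  -- constancy of values of differences
  have hconst : ∀ j k : Ordinal, j < k → k < lam →
      val (v k - v j) = val (v (j + 1) - v j) := by
    intro j k hjk hk
    have hj1k : j + 1 ≤ k := by rw [Ordinal.add_one_eq_succ]; exact Order.succ_le_of_lt hjk
    rcases eq_or_lt_of_le hj1k with he | hl
    · rw [he]
    · have h1 := hpc j (j + 1) k (hlt_succ j) hl hk
      -- val (v j - v k) < val (v (j+1) - v k)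
      have h2 : val (v k - v j) < val (v (j + 1) - v k) := by
        rw [show v k - v j = -(v j - v k) by ring, hval.val_neg]; exact h1
      have h3 := hval.val_add_of_lt h2
      rw [show v k - v j + (v (j + 1) - v k) = v (j + 1) - v j by ring] at h3
      exact h3.symm
  set d := v (i + 1) - v i with hd
  set d' := v (i' + 1) - v i' with hd'
  have hdne : d ≠ 0 := hne i hilam
  have hd'ne : d' ≠ 0 := hne i' hi'lam
  have hdtop : val d ≠ ⊤ := hval.2.1 d hdne
  -- val d < val d'
  have hdd' : val d < val d' := by
    have h1 := hpc i i' (i' + 1) hii' (hlt_succ i') (hsucc _ hi'lam)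
    have h2 : val (v i - v (i' + 1)) = val d := by
      rw [show v i - v (i' + 1) = -(v (i' + 1) - v i) by ring, hval.val_neg,
        hconst i (i' + 1) (hii'.trans (hlt_succ i')) (hsucc _ hi'lam)]
    have h3 : val (v i' - v (i' + 1)) = val d' := by
      rw [show v i' - v (i' + 1) = -(v (i' + 1) - v i') by ring, hval.val_neg]
    rw [h2, h3] at h1
    exact h1
  set α : K' := (v i' - v i) / d with hα
  set β : K' := d' / d with hβ
  -- memberships in Ksub
  have hvimem := (hv i hilam).1
  have hvi1mem := (hv (i + 1) (hsucc _ hilam)).1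
  have hvi'mem := (hv i' hi'lam).1
  have hvi'1mem := (hv (i' + 1) (hsucc _ hi'lam)).1
  have hdmem : d ∈ Ksub := sub_mem hvi1mem hvimem
  have hd'mem : d' ∈ Ksub := sub_mem hvi'1mem hvi'mem
  have hαmem : α ∈ Ksub := div_mem (sub_mem hvi'mem hvimem) hdmem
  have hβmem : β ∈ Ksub := div_mem hd'mem hdmem
  -- val α = 0
  have hα0 : val α = 0 := by
    have h1 : α * d = v i' - v i := div_mul_cancel₀ _ hdne
    have h2 : val α + val d = val d := by
      rw [← hmul, h1, hconst i i' hii' hi'lam]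
    exact myCancel hdtop h2
  -- 0 < val β
  have hβpos : 0 < val β := by
    have h1 : β * d = d' := div_mul_cancel₀ _ hdne
    have h2 : val β + val d = val d' := by rw [← hmul, h1]
    by_contra hc
    push_neg at hc
    have : val β + val d ≤ 0 + val d := add_le_add_left hc (val d)
    rw [h2, zero_add] at this
    exact absurd hdd' (not_lt.mpr this)
  -- the identity
  have hid : (x - v i) / d = α + β * ((x - v i') / d') := by
    rw [hα, hβ]
    field_simp
    ring
  refine ⟨⟨α, β, hαmem, hα0, hβmem, hβpos, hid⟩, ?_⟩
  -- part 2
  have hmono : Subring.closure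
      ({w : K' | w ∈ Ksub ∧ 0 ≤ val w} ∪ {(x - v i) / (v (i + 1) - v i)}) ≤
      Subring.closure
      ({w : K' | w ∈ Ksub ∧ 0 ≤ val w} ∪ {(x - v i') / (v (i' + 1) - v i')}) := by
    rw [Subring.closure_le]
    rintro w (hw | hw)
    · exact Subring.subset_closure (Or.inl hw)
    · rw [Set.mem_singleton_iff] at hw
      rw [hw, ← hd, hid]
      exact add_mem
        (Subring.subset_closure (Or.inl ⟨hαmem, hα0.ge⟩))
        (mul_mem (Subring.subset_closure (Or.inl ⟨hβmem, hβpos.le⟩))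
          (Subring.subset_closure (Or.inr (by rw [hd']; rfl))))
  rintro z ⟨p, q, hp, hq, hq0, hz⟩
  exact ⟨p, q, hmono hp, hmono hq, hq0, hz⟩
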